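/- arXiv:2209.01433 — 4 statements merged into one kernel-verified Lean document; each statement's English description precedes it below -/
import Mathlib

section
/- Let x ∈ ℝⁿ, z ∈ {0,1}ⁿ with ∑ᵢ xᵢ² ≤ 1 and xᵢ(1 - zᵢ) = 0 for all i. Then for every α ∈ ℝⁿ, ∑ᵢ |αᵢxᵢ| ≤ √(∑ᵢ αᵢ² zᵢ). -/
theorem stmt_1 (n : ℕ) (x z : Fin n → ℝ) (hz : ∀ i, z i = 0 ∨ z i = 1)
    (hx : ∑ i, (x i)^2 ≤ 1) (hc : ∀ i, x i * (1 - z i) = 0) (α : Fin n → ℝ) :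
    ∑ i, |α i * x i| ≤ Real.sqrt (∑ i, (α i)^2 * z i) := by
  have key : ∀ i, |α i * x i| = |α i| * Real.sqrt (z i) * |x i| := by
    intro i
    rcases hz i with h | h
    · have : x i = 0 := by have := hc i; rw [h] at this; simpa using this
      simp [this]
    · simp [h, abs_mul]
  calc ∑ i, |α i * x i| = ∑ i, (|α i| * Real.sqrt (z i)) * |x i| := by
        simp_rw [key]
    _ ≤ Real.sqrt (∑ i, (|α i| * Real.sqrt (z i))^2) * Real.sqrt (∑ i, |x i|^2) :=
        Real.sum_mul_le_sqrt_mul_sqrt _ _ _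
    _ = Real.sqrt (∑ i, (α i)^2 * z i) * Real.sqrt (∑ i, (x i)^2) := by
        congr 1
        · congr 1; apply Finset.sum_congr rfl; intro i _
          rw [mul_pow, sq_abs, Real.sq_sqrt]
          rcases hz i with h | h <;> simp [h]
        · simp [sq_abs]
    _ ≤ Real.sqrt (∑ i, (α i)^2 * z i) * 1 := by
        apply mul_le_mul_of_nonneg_left _ (Real.sqrt_nonneg _)
        simpa using Real.sqrt_le_sqrt hx
    _ = _ := mul_one _
end

section
/- Let x ∈ ℝⁿ and z ∈ ℝⁿ with zᵢ > 0 for all i, and suppose ∑ᵢ xᵢ²/zᵢ > 1. Then setting αᵢ = κ·xᵢ/zᵢ for κ > 0 gives ∑ᵢ |αᵢxᵢ| - √(∑ᵢ αᵢ² zᵢ) = κ·√(∑ᵢ xᵢ²/zᵢ)·(√(∑ᵢ xᵢ²/zᵢ) - 1) > 0, so the supremum over α ∈ ℝⁿ of ∑ᵢ |αᵢxᵢ| - √(∑ᵢ αᵢ² zᵢ) is +∞. -/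
theorem stmt_11 (n : ℕ) (x z : Fin n → ℝ) (hz : ∀ i, 0 < z i)
    (h : 1 < ∑ i, (x i)^2 / z i) :
    (∀ κ : ℝ, 0 < κ →
      (∑ i, |(κ * x i / z i) * x i|) - Real.sqrt (∑ i, (κ * x i / z i)^2 * z i)
        = κ * Real.sqrt (∑ i, (x i)^2 / z i) * (Real.sqrt (∑ i, (x i)^2 / z i) - 1) ∧
      0 < κ * Real.sqrt (∑ i, (x i)^2 / z i) * (Real.sqrt (∑ i, (x i)^2 / z i) - 1)) ∧
    ¬ BddAbove {v : ℝ | ∃ α : Fin n → ℝ,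
        v = (∑ i, |α i * x i|) - Real.sqrt (∑ i, (α i)^2 * z i)} := by
  set S := ∑ i, (x i)^2 / z i with hSdef
  have hS0 : 0 < S := lt_trans one_pos h
  have hsq : Real.sqrt S * Real.sqrt S = S := Real.mul_self_sqrt hS0.le
  have hs1 : 1 < Real.sqrt S := by
    rw [show (1:ℝ) = Real.sqrt 1 from (Real.sqrt_one).symm]
    exact Real.sqrt_lt_sqrt (by norm_num) h
  have key : ∀ κ : ℝ, 0 < κ →
      (∑ i, |(κ * x i / z i) * x i|) - Real.sqrt (∑ i, (κ * x i / z i)^2 * z i)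
        = κ * Real.sqrt S * (Real.sqrt S - 1) := by
    intro κ hκ
    have h1 : (∑ i, |(κ * x i / z i) * x i|) = κ * S := by
      rw [hSdef, Finset.mul_sum]
      apply Finset.sum_congr rfl
      intro i _
      have hzi := hz i
      have : (κ * x i / z i) * x i = κ * ((x i)^2 / z i) := by
        field_simp
      rw [this, abs_of_nonneg]
      positivity
    have h2 : (∑ i, (κ * x i / z i)^2 * z i) = κ^2 * S := by
      rw [hSdef, Finset.mul_sum]
      apply Finset.sum_congr rfl
      intro i _
      have hzi := (hz i).ne'
      field_simp
    have h3 : Real.sqrt (κ^2 * S) = κ * Real.sqrt S := by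
      rw [Real.sqrt_mul (by positivity), Real.sqrt_sq hκ.le]
    rw [h1, h2, h3]
    nlinarith [hsq]
  have hc : 0 < Real.sqrt S * (Real.sqrt S - 1) := by nlinarith
  constructor
  · intro κ hκ
    refine ⟨key κ hκ, ?_⟩
    nlinarith
  · rintro ⟨b, hb⟩
    set c := Real.sqrt S * (Real.sqrt S - 1) with hcdef
    set κ := max 1 ((b + 1) / c) with hκdef
    have hκ0 : 0 < κ := lt_of_lt_of_le one_pos (le_max_left _ _)
    have hmem : κ * Real.sqrt S * (Real.sqrt S - 1) ∈
        {v : ℝ | ∃ α : Fin n → ℝ,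
          v = (∑ i, |α i * x i|) - Real.sqrt (∑ i, (α i)^2 * z i)} := by
      exact ⟨fun i => κ * x i / z i, (key κ hκ0).symm⟩
    have hle := hb hmem
    have hge : (b + 1) / c ≤ κ := le_max_right _ _
    have : b + 1 ≤ κ * c := by
      rw [div_le_iff₀ hc] at hge; linarith
    have : κ * Real.sqrt S * (Real.sqrt S - 1) = κ * c := by ring
    nlinarith [hb hmem]
end

section
/- Let k be a positive integer with k ≤ n. The convex hull of {(x,z) ∈ ℝⁿ × {0,1}ⁿ : ‖x‖₁ ≤ √(‖z‖₁), ‖z‖₁ = k} equals {(x,z) ∈ ℝⁿ × [0,1]ⁿ : ‖x‖₁ ≤ √k, ‖z‖₁ = k}. -/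
open Finset

open scoped Classical in
lemma hyper_step (n k : ℕ) :
    ∀ N (z : Fin n → ℝ),
      (Finset.univ.filter (fun i => z i ≠ 0 ∧ z i ≠ 1)).card ≤ N →
      (∀ i, 0 ≤ z i ∧ z i ≤ 1) → (∑ i, z i) = (k : ℝ) →
      z ∈ convexHull ℝ {w : Fin n → ℝ | (∀ i, w i = 0 ∨ w i = 1) ∧ ∑ i, w i = (k : ℝ)} := by
  intro N
  induction N with
  | zero =>
    intro z hcard hbd hsum
    apply subset_convexHull
    refine ⟨fun i => ?_, hsum⟩
    by_contra h
    push_neg at h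
    have hm : i ∈ Finset.univ.filter (fun i => z i ≠ 0 ∧ z i ≠ 1) := by
      simp [h.1, h.2]
    have := Finset.card_pos.mpr ⟨i, hm⟩
    omega
  | succ N ih =>
    intro z hcard hbd hsum
    by_cases hle : (Finset.univ.filter (fun i => z i ≠ 0 ∧ z i ≠ 1)).card ≤ N
    · exact ih z hle hbd hsum
    have hFcard : (Finset.univ.filter (fun i => z i ≠ 0 ∧ z i ≠ 1)).card = N + 1 := by omega
    have hFne : (Finset.univ.filter (fun i => z i ≠ 0 ∧ z i ≠ 1)).Nonempty :=
      Finset.card_pos.mp (by omega)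
    obtain ⟨i, hi⟩ := hFne
    have hiF : z i ≠ 0 ∧ z i ≠ 1 := (Finset.mem_filter.mp hi).2
    have hzi0 : (0:ℝ) < z i := lt_of_le_of_ne (hbd i).1 (Ne.symm hiF.1)
    have hzi1 : z i < 1 := lt_of_le_of_ne (hbd i).2 hiF.2
    have hj : ∃ j ∈ Finset.univ.filter (fun i => z i ≠ 0 ∧ z i ≠ 1), j ≠ i := by
      by_contra hcon
      push_neg at hcon
      have hbin : ∀ l, l ≠ i → (z l = 0 ∨ z l = 1) := by
        intro l hl
        by_contra h
        push_neg at h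
        exact hl (hcon l (Finset.mem_filter.mpr ⟨Finset.mem_univ l, h.1, h.2⟩))
      have hW : ∑ l ∈ Finset.univ.erase i, z l
          = ((∑ l ∈ Finset.univ.erase i, (fun l => if z l = 1 then (1:ℤ) else 0) l : ℤ) : ℝ) := by
        push_cast
        refine Finset.sum_congr rfl fun l hl => ?_
        rcases hbin l (Finset.ne_of_mem_erase hl) with h0 | h1
        · simp [h0]
        · simp [h1]
      have hsplit : z i + ∑ l ∈ Finset.univ.erase i, z l = (k : ℝ) := by
        rw [Finset.add_sum_erase Finset.univ z (Finset.mem_univ i)]; exact hsum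
      have h0 : (0:ℝ) < ((k : ℤ) - ∑ l ∈ Finset.univ.erase i, (fun l => if z l = 1 then (1:ℤ) else 0) l : ℤ) := by
        push_cast
        push_cast at hW
        linarith
      have h1 : (((k : ℤ) - ∑ l ∈ Finset.univ.erase i, (fun l => if z l = 1 then (1:ℤ) else 0) l : ℤ) : ℝ) < 1 := by
        push_cast
        push_cast at hW
        linarith
      have h0' : (0:ℤ) < (k : ℤ) - ∑ l ∈ Finset.univ.erase i, (fun l => if z l = 1 then (1:ℤ) else 0) l := by
        exact_mod_cast h0
      have h1' : (k : ℤ) - ∑ l ∈ Finset.univ.erase i, (fun l => if z l = 1 then (1:ℤ) else 0) l < 1 := by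
        exact_mod_cast h1
      omega
    obtain ⟨j, hjF, hji⟩ := hj
    have hjF' : z j ≠ 0 ∧ z j ≠ 1 := (Finset.mem_filter.mp hjF).2
    have hzj0 : (0:ℝ) < z j := lt_of_le_of_ne (hbd j).1 (Ne.symm hjF'.1)
    have hzj1 : z j < 1 := lt_of_le_of_ne (hbd j).2 hjF'.2
    obtain ⟨d, hdi, hdj, hdo⟩ :
        ∃ d : Fin n → ℝ, d i = 1 ∧ d j = -1 ∧ ∀ l, l ≠ i → l ≠ j → d l = 0 := by
      refine ⟨fun l => if l = i then 1 else if l = j then -1 else 0, by simp, ?_, ?_⟩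
      · simp [hji]
      · intro l h1 h2; simp [h1, h2]
    have hdsum : ∑ l, d l = 0 := by
      rw [← Finset.add_sum_erase Finset.univ d (Finset.mem_univ i), hdi]
      have hjmem : j ∈ Finset.univ.erase i := Finset.mem_erase.mpr ⟨hji, Finset.mem_univ j⟩
      rw [← Finset.add_sum_erase _ d hjmem, hdj]
      have : ∑ l ∈ (Finset.univ.erase i).erase j, d l = 0 := by
        refine Finset.sum_eq_zero fun l hl => ?_
        have h2 := Finset.ne_of_mem_erase hl
        have h1 := Finset.ne_of_mem_erase (Finset.mem_of_mem_erase hl)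
        exact hdo l h1 h2
      rw [this]; ring
    obtain ⟨t₁, ht₁⟩ : ∃ t, t = min (1 - z i) (z j) := ⟨_, rfl⟩
    obtain ⟨t₂, ht₂⟩ : ∃ t, t = min (z i) (1 - z j) := ⟨_, rfl⟩
    have ht₁0 : 0 < t₁ := ht₁ ▸ lt_min (by linarith) hzj0
    have ht₂0 : 0 < t₂ := ht₂ ▸ lt_min hzi0 (by linarith)
    have ht₁a : t₁ ≤ 1 - z i := ht₁ ▸ min_le_left _ _
    have ht₁b : t₁ ≤ z j := ht₁ ▸ min_le_right _ _
    have ht₂a : t₂ ≤ z i := ht₂ ▸ min_le_left _ _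
    have ht₂b : t₂ ≤ 1 - z j := ht₂ ▸ min_le_right _ _
    obtain ⟨u, hu⟩ : ∃ u : Fin n → ℝ, u = fun l => z l + t₁ * d l := ⟨_, rfl⟩
    obtain ⟨v, hv⟩ : ∃ v : Fin n → ℝ, v = fun l => z l - t₂ * d l := ⟨_, rfl⟩
    have hui : u i = z i + t₁ := by rw [hu]; simp [hdi]
    have huj : u j = z j - t₁ := by rw [hu]; simp [hdj]; ring
    have huo : ∀ l, l ≠ i → l ≠ j → u l = z l := by
      intro l h1 h2; rw [hu]; simp [hdo l h1 h2]
    have hvi : v i = z i - t₂ := by rw [hv]; simp [hdi]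
    have hvj : v j = z j + t₂ := by rw [hv]; simp [hdj]
    have hvo : ∀ l, l ≠ i → l ≠ j → v l = z l := by
      intro l h1 h2; rw [hv]; simp [hdo l h1 h2]
    have hubd : ∀ l, 0 ≤ u l ∧ u l ≤ 1 := by
      intro l
      by_cases h1 : l = i
      · subst h1; rw [hui]; constructor <;> linarith
      · by_cases h2 : l = j
        · subst h2; rw [huj]; constructor <;> linarith
        · rw [huo l h1 h2]; exact hbd l
    have hvbd : ∀ l, 0 ≤ v l ∧ v l ≤ 1 := by
      intro l
      by_cases h1 : l = i
      · subst h1; rw [hvi]; constructor <;> linarith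
      · by_cases h2 : l = j
        · subst h2; rw [hvj]; constructor <;> linarith
        · rw [hvo l h1 h2]; exact hbd l
    have husum : ∑ l, u l = (k : ℝ) := by
      rw [hu]
      rw [Finset.sum_add_distrib, ← Finset.mul_sum, hdsum, hsum]; ring
    have hvsum : ∑ l, v l = (k : ℝ) := by
      rw [hv]
      rw [Finset.sum_sub_distrib, ← Finset.mul_sum, hdsum, hsum]; ring
    have hFsub : ∀ (x : Fin n → ℝ), (∀ l, l ≠ i → l ≠ j → x l = z l) →
        (Finset.univ.filter (fun l => x l ≠ 0 ∧ x l ≠ 1))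
          ⊆ Finset.univ.filter (fun i => z i ≠ 0 ∧ z i ≠ 1) := by
      intro x hx l hl
      rw [Finset.mem_filter] at hl ⊢
      refine ⟨Finset.mem_univ l, ?_⟩
      by_cases h1 : l = i
      · subst h1; exact hiF
      · by_cases h2 : l = j
        · subst h2; exact hjF'
        · rw [← hx l h1 h2]; exact hl.2
    have hcardgen : ∀ (x : Fin n → ℝ), (∀ l, l ≠ i → l ≠ j → x l = z l) →
        (∃ m ∈ Finset.univ.filter (fun i => z i ≠ 0 ∧ z i ≠ 1),
          m ∉ Finset.univ.filter (fun l => x l ≠ 0 ∧ x l ≠ 1)) →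
        (Finset.univ.filter (fun l => x l ≠ 0 ∧ x l ≠ 1)).card ≤ N := by
      intro x hx ⟨m, hm, hm'⟩
      have hss : (Finset.univ.filter (fun l => x l ≠ 0 ∧ x l ≠ 1))
          ⊂ Finset.univ.filter (fun i => z i ≠ 0 ∧ z i ≠ 1) :=
        (Finset.ssubset_iff_of_subset (hFsub x hx)).mpr ⟨m, hm, hm'⟩
      have := Finset.card_lt_card hss
      omega
    have hucard : (Finset.univ.filter (fun l => u l ≠ 0 ∧ u l ≠ 1)).card ≤ N := by
      refine hcardgen u huo ?_
      rcases min_choice (1 - z i) (z j) with he | he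
      · refine ⟨i, hi, ?_⟩
        have h1 : u i = 1 := by rw [hui, ht₁, he]; ring
        simp [h1]
      · refine ⟨j, hjF, ?_⟩
        have h1 : u j = 0 := by rw [huj, ht₁, he]; ring
        simp [h1]
    have hvcard : (Finset.univ.filter (fun l => v l ≠ 0 ∧ v l ≠ 1)).card ≤ N := by
      refine hcardgen v hvo ?_
      rcases min_choice (z i) (1 - z j) with he | he
      · refine ⟨i, hi, ?_⟩
        have h1 : v i = 0 := by rw [hvi, ht₂, he]; ring
        simp [h1]
      · refine ⟨j, hjF, ?_⟩
        have h1 : v j = 1 := by rw [hvj, ht₂, he]; ring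
        simp [h1]
    have humem := ih u hucard hubd husum
    have hvmem := ih v hvcard hvbd hvsum
    have hne : t₁ + t₂ ≠ 0 := by positivity
    have hcomb : z = (t₂ / (t₁ + t₂)) • u + (t₁ / (t₁ + t₂)) • v := by
      funext l
      rw [hu, hv]
      simp only [Pi.add_apply, Pi.smul_apply, smul_eq_mul]
      field_simp
      ring
    rw [hcomb]
    exact (convex_convexHull ℝ _) humem hvmem (by positivity) (by positivity) (by field_simp; ring)

open scoped Classical in
lemma hyper_eq (n k : ℕ) :
    convexHull ℝ {w : Fin n → ℝ | (∀ i, w i = 0 ∨ w i = 1) ∧ ∑ i, w i = (k : ℝ)}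
      = {w : Fin n → ℝ | (∀ i, 0 ≤ w i ∧ w i ≤ 1) ∧ ∑ i, w i = (k : ℝ)} := by
  apply le_antisymm
  · apply convexHull_min
    · intro w hw
      refine ⟨fun i => ?_, hw.2⟩
      rcases hw.1 i with h | h <;> rw [h] <;> norm_num
    · intro x hx y hy a b ha hb hab
      constructor
      · intro i
        have hx1 := (hx.1 i).1; have hx2 := (hx.1 i).2
        have hy1 := (hy.1 i).1; have hy2 := (hy.1 i).2
        simp only [Pi.add_apply, Pi.smul_apply, smul_eq_mul]
        constructor
        · nlinarith
        · nlinarith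
      · simp only [Pi.add_apply, Pi.smul_apply, smul_eq_mul]
        rw [Finset.sum_add_distrib, ← Finset.mul_sum, ← Finset.mul_sum, hx.2, hy.2]
        nlinarith
  · intro w hw
    exact hyper_step n k (Finset.univ.filter (fun i => w i ≠ 0 ∧ w i ≠ 1)).card w le_rfl hw.1 hw.2

lemma l1ball_convex (n : ℕ) (r : ℝ) :
    Convex ℝ {x : Fin n → ℝ | (∑ i, |x i|) ≤ r} := by
  intro x hx y hy a b ha hb hab
  simp only [Set.mem_setOf_eq, Pi.add_apply, Pi.smul_apply, smul_eq_mul] at *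
  calc ∑ i, |a * x i + b * y i| ≤ ∑ i, (a * |x i| + b * |y i|) := by
        refine Finset.sum_le_sum fun i _ => ?_
        calc |a * x i + b * y i| ≤ |a * x i| + |b * y i| := abs_add_le _ _
          _ = a * |x i| + b * |y i| := by rw [abs_mul, abs_mul, abs_of_nonneg ha, abs_of_nonneg hb]
    _ = a * ∑ i, |x i| + b * ∑ i, |y i| := by
        rw [Finset.sum_add_distrib, ← Finset.mul_sum, ← Finset.mul_sum]
    _ ≤ a * r + b * r := by
        have h1 : a * ∑ i, |x i| ≤ a * r := mul_le_mul_of_nonneg_left hx ha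
        have h2 : b * ∑ i, |y i| ≤ b * r := mul_le_mul_of_nonneg_left hy hb
        linarith
    _ = r := by rw [← add_mul, hab, one_mul]

theorem stmt_15 (n k : ℕ) (hk : 1 ≤ k) (hkn : k ≤ n) :
    convexHull ℝ {p : (Fin n → ℝ) × (Fin n → ℝ) |
        (∀ i, p.2 i = 0 ∨ p.2 i = 1) ∧
        (∑ i, |p.1 i|) ≤ Real.sqrt (∑ i, p.2 i) ∧ ∑ i, p.2 i = k}
      = {p : (Fin n → ℝ) × (Fin n → ℝ) |
        (∀ i, 0 ≤ p.2 i ∧ p.2 i ≤ 1) ∧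
        (∑ i, |p.1 i|) ≤ Real.sqrt k ∧ ∑ i, p.2 i = k} := by
  have hS : {p : (Fin n → ℝ) × (Fin n → ℝ) |
        (∀ i, p.2 i = 0 ∨ p.2 i = 1) ∧
        (∑ i, |p.1 i|) ≤ Real.sqrt (∑ i, p.2 i) ∧ ∑ i, p.2 i = k}
      = {x : Fin n → ℝ | (∑ i, |x i|) ≤ Real.sqrt k} ×ˢ
        {w : Fin n → ℝ | (∀ i, w i = 0 ∨ w i = 1) ∧ ∑ i, w i = (k : ℝ)} := by
    ext p
    simp only [Set.mem_setOf_eq, Set.mem_prod]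
    constructor
    · rintro ⟨hbin, hle, hsum⟩
      rw [hsum] at hle
      exact ⟨hle, hbin, hsum⟩
    · rintro ⟨hle, hbin, hsum⟩
      exact ⟨hbin, by rw [hsum]; exact hle, hsum⟩
  have hT : {p : (Fin n → ℝ) × (Fin n → ℝ) |
        (∀ i, 0 ≤ p.2 i ∧ p.2 i ≤ 1) ∧
        (∑ i, |p.1 i|) ≤ Real.sqrt k ∧ ∑ i, p.2 i = k}
      = {x : Fin n → ℝ | (∑ i, |x i|) ≤ Real.sqrt k} ×ˢ
        {w : Fin n → ℝ | (∀ i, 0 ≤ w i ∧ w i ≤ 1) ∧ ∑ i, w i = (k : ℝ)} := by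
    ext p
    simp only [Set.mem_setOf_eq, Set.mem_prod]
    tauto
  rw [hS, convexHull_prod, (l1ball_convex n (Real.sqrt k)).convexHull_eq, hyper_eq, hT]
end

section
/- Let a, c ∈ ℝⁿ. The optimal value of min { a'x + c'z : ‖x‖₂² ≤ 1, x∘(1-z)=0, x ∈ ℝⁿ, z ∈ {0,1}ⁿ } equals the minimum of 0 and min over nonempty S ⊆ {1,…,n} of ∑_{i∈S} cᵢ - √(∑_{i∈S} aᵢ²). -/
open Finset


lemma stmt16_sum_ite {n : ℕ} (S : Finset (Fin n)) (f : Fin n → ℝ) :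
    ∑ i, (if i ∈ S then f i else 0) = ∑ i ∈ S, f i := by
  rw [Finset.sum_ite_mem, Finset.univ_inter]

/-- Step A: every support value is attained by a feasible point. -/
lemma stmt16_stepA (n : ℕ) (a c : Fin n → ℝ) (S : Finset (Fin n)) :
    ∃ x z : Fin n → ℝ, (∀ i, z i = 0 ∨ z i = 1) ∧
      (∑ i, (x i)^2) ≤ 1 ∧ (∀ i, x i * (1 - z i) = 0) ∧
      (∑ i ∈ S, c i - Real.sqrt (∑ i ∈ S, (a i)^2))
        = ∑ i, a i * x i + ∑ i, c i * z i := by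
  set t := Real.sqrt (∑ i ∈ S, (a i)^2) with ht
  have hsum0 : (0:ℝ) ≤ ∑ i ∈ S, (a i)^2 := by positivity
  have ht2 : t^2 = ∑ i ∈ S, (a i)^2 := Real.sq_sqrt hsum0
  refine ⟨fun i => if i ∈ S then -(a i)/t else 0, fun i => if i ∈ S then 1 else 0,
    ?_, ?_, ?_, ?_⟩
  · intro i; by_cases h : i ∈ S <;> simp [h]
  · have h1 : ∑ i, (if i ∈ S then -(a i)/t else 0)^2 = ∑ i ∈ S, (a i)^2 / t^2 := by
      rw [← stmt16_sum_ite S (fun i => (a i)^2 / t^2)]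
      apply Finset.sum_congr rfl; intro i _
      by_cases h : i ∈ S <;> simp [h] <;> ring
    rw [h1, ← Finset.sum_div, ← ht2]
    rcases eq_or_ne t 0 with h | h
    · simp [h]
    · rw [div_self (pow_ne_zero _ h)]
  · intro i; by_cases h : i ∈ S <;> simp [h]
  · have h1 : ∑ i, a i * (if i ∈ S then -(a i)/t else 0) = ∑ i ∈ S, -((a i)^2) / t := by
      rw [← stmt16_sum_ite S (fun i => -((a i)^2) / t)]
      apply Finset.sum_congr rfl; intro i _
      by_cases h : i ∈ S <;> simp [h] <;> ring
    have h2 : ∑ i, c i * (if i ∈ S then (1:ℝ) else 0) = ∑ i ∈ S, c i := by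
      rw [← stmt16_sum_ite S c]
      apply Finset.sum_congr rfl; intro i _
      by_cases h : i ∈ S <;> simp [h]
    rw [h1, h2]
    have h3 : ∑ i ∈ S, -((a i)^2) / t = -t := by
      rw [← Finset.sum_div, Finset.sum_neg_distrib, ← ht2]
      rcases eq_or_ne t 0 with h | h
      · simp [h]
      · rw [neg_div, pow_two, mul_div_assoc, div_self h, mul_one]
    rw [h3]; ring

/-- Step B: every feasible value is bounded below by some support value. -/
lemma stmt16_stepB (n : ℕ) (a c : Fin n → ℝ) (x z : Fin n → ℝ)
    (hz : ∀ i, z i = 0 ∨ z i = 1) (hx1 : (∑ i, (x i)^2) ≤ 1)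
    (hxz : ∀ i, x i * (1 - z i) = 0) :
    ∃ S : Finset (Fin n),
      (∑ i ∈ S, c i - Real.sqrt (∑ i ∈ S, (a i)^2))
        ≤ ∑ i, a i * x i + ∑ i, c i * z i := by
  set S := Finset.univ.filter (fun i => z i = 1) with hS
  have hmem : ∀ i, i ∈ S ↔ z i = 1 := by
    intro i; simp [hS]
  have hxout : ∀ i, i ∉ S → x i = 0 := by
    intro i hi
    have hz0 : z i = 0 := by
      rcases hz i with h | h
      · exact h
      · exact absurd ((hmem i).2 h) hi
    have := hxz i
    rw [hz0] at this; simpa using this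
  refine ⟨S, ?_⟩
  have hcz : ∑ i, c i * z i = ∑ i ∈ S, c i := by
    rw [← stmt16_sum_ite S c]
    apply Finset.sum_congr rfl; intro i _
    by_cases h : i ∈ S
    · simp [h, (hmem i).1 h]
    · have hz0 : z i = 0 := by
        rcases hz i with h' | h'
        · exact h'
        · exact absurd ((hmem i).2 h') h
      simp [h, hz0]
  have hax : ∑ i, a i * x i = ∑ i ∈ S, a i * x i := by
    rw [← stmt16_sum_ite S (fun i => a i * x i)]
    apply Finset.sum_congr rfl; intro i _
    by_cases h : i ∈ S
    · simp [h]
    · simp [h, hxout i h]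
  rw [hcz, hax]
  have hCS := Real.sum_mul_le_sqrt_mul_sqrt S (fun i => -(a i)) x
  simp only [neg_sq] at hCS
  have hCS' : -(Real.sqrt (∑ i ∈ S, (a i)^2) * Real.sqrt (∑ i ∈ S, (x i)^2))
      ≤ ∑ i ∈ S, a i * x i := by
    have : ∑ i ∈ S, -(a i) * x i = -(∑ i ∈ S, a i * x i) := by
      rw [← Finset.sum_neg_distrib]
      exact Finset.sum_congr rfl fun i _ => by ring
    rw [this] at hCS
    linarith
  have hx2 : Real.sqrt (∑ i ∈ S, (x i)^2) ≤ 1 := by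
    have h1 : ∑ i ∈ S, (x i)^2 ≤ ∑ i, (x i)^2 :=
      Finset.sum_le_sum_of_subset_of_nonneg (Finset.subset_univ S)
        (fun i _ _ => sq_nonneg _)
    calc Real.sqrt (∑ i ∈ S, (x i)^2) ≤ Real.sqrt 1 :=
          Real.sqrt_le_sqrt (le_trans h1 hx1)
      _ = 1 := Real.sqrt_one
  have hA : (0:ℝ) ≤ Real.sqrt (∑ i ∈ S, (a i)^2) := Real.sqrt_nonneg _
  nlinarith [hCS', hx2, hA, Real.sqrt_nonneg (∑ i ∈ S, (x i)^2)]

theorem stmt_16 (n : ℕ) (a c : Fin n → ℝ) :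
    sInf {v : ℝ | ∃ x z : Fin n → ℝ, (∀ i, z i = 0 ∨ z i = 1) ∧
        (∑ i, (x i)^2) ≤ 1 ∧ (∀ i, x i * (1 - z i) = 0) ∧
        v = ∑ i, a i * x i + ∑ i, c i * z i}
      = min 0 (sInf {v : ℝ | ∃ S : Finset (Fin n), S.Nonempty ∧
        v = ∑ i ∈ S, c i - Real.sqrt (∑ i ∈ S, (a i)^2)}) := by
  set F : Finset (Fin n) → ℝ := fun S => ∑ i ∈ S, c i - Real.sqrt (∑ i ∈ S, (a i)^2)
    with hF
  set L := {v : ℝ | ∃ x z : Fin n → ℝ, (∀ i, z i = 0 ∨ z i = 1) ∧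
      (∑ i, (x i)^2) ≤ 1 ∧ (∀ i, x i * (1 - z i) = 0) ∧
      v = ∑ i, a i * x i + ∑ i, c i * z i} with hL
  set T := {v : ℝ | ∃ S : Finset (Fin n), S.Nonempty ∧ v = F S} with hT
  have hFL : ∀ S : Finset (Fin n), F S ∈ L := by
    intro S
    obtain ⟨x, z, h1, h2, h3, h4⟩ := stmt16_stepA n a c S
    exact ⟨x, z, h1, h2, h3, h4⟩
  have hF0 : F ∅ = 0 := by simp [hF]
  have h0L : (0:ℝ) ∈ L := by rw [← hF0]; exact hFL ∅
  -- lower bound for L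
  set m := (Finset.univ : Finset (Finset (Fin n))).inf' ⟨∅, Finset.mem_univ _⟩ F with hm
  have hLv : ∀ v ∈ L, ∃ S : Finset (Fin n), F S ≤ v := by
    rintro v ⟨x, z, h1, h2, h3, rfl⟩
    exact stmt16_stepB n a c x z h1 h2 h3
  have hLbdd : BddBelow L := by
    refine ⟨m, fun v hv => ?_⟩
    obtain ⟨S, hS⟩ := hLv v hv
    exact le_trans (Finset.inf'_le F (Finset.mem_univ S)) hS
  have hTfin : T.Finite := by
    apply Set.Finite.subset (Set.finite_range F)
    rintro v ⟨S, _, rfl⟩; exact ⟨S, rfl⟩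
  have hTbdd : BddBelow T := hTfin.bddBelow
  apply le_antisymm
  · apply le_min
    · exact csInf_le hLbdd h0L
    · by_cases hTne : T.Nonempty
      · apply le_csInf hTne
        rintro v ⟨S, _, rfl⟩
        exact csInf_le hLbdd (hFL S)
      · rw [Set.not_nonempty_iff_eq_empty] at hTne
        rw [hTne, Real.sInf_empty]
        exact csInf_le hLbdd h0L
  · apply le_csInf ⟨0, h0L⟩
    intro v hv
    obtain ⟨S, hS⟩ := hLv v hv
    rcases S.eq_empty_or_nonempty with rfl | hSne
    · rw [hF0] at hS
      exact le_trans (min_le_left _ _) hS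
    · have hFT : F S ∈ T := ⟨S, hSne, rfl⟩
      exact le_trans (min_le_right _ _) (le_trans (csInf_le hTbdd hFT) hS)
end
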